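/- arXiv:2404.09268 — 2 statements merged into one kernel-verified Lean document; each statement's English description precedes it below -/
import Mathlib

section
/- Let G be a finite simple graph with at least two vertices. Then λ(G) ≤ -η(G), where η(G) is the maximum, over all induced bipartite subgraphs H of G with bipartition V₁ ∪ V₂ into nonempty parts, of |E(H)| / √(|V₁|·|V₂|). -/
/-!
Common definitions: smallest adjacency eigenvalue, independent vertex sets,
edge counts of induced subgraphs, chromatic number, independence number,
and the invariants `η`, `ι`, `θ` from the paper.
-/

open Finset SimpleGraph Matrix

set_option linter.unusedSectionVars false

variable {V : Type} [Fintype V] [DecidableEq V]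

/-- A finite set of vertices is an independent set in `G`. -/
def IsIndepFinset (G : SimpleGraph V) (s : Finset V) : Prop :=
  ∀ u ∈ s, ∀ v ∈ s, ¬ G.Adj u v

/-- The adjacency matrix of a finite graph is Hermitian (over `ℝ`). -/
theorem adj_isHermitian (G : SimpleGraph V) [DecidableRel G.Adj] :
    (G.adjMatrix ℝ).IsHermitian := by
  rw [Matrix.IsHermitian, conjTranspose_eq_transpose_of_trivial]
  exact isSymm_adjMatrix G

/-- `λ(G)`: the smallest eigenvalue of the adjacency matrix of `G`. -/
noncomputable def lambdaMin (G : SimpleGraph V) : ℝ :=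
  letI := Classical.decRel G.Adj
  ⨅ i, (adj_isHermitian G).eigenvalues i

/-- `|E(G)|`: the number of edges of `G`. -/
noncomputable def edgeCount (G : SimpleGraph V) : ℕ := Nat.card G.edgeSet

/-- The number of edges of the subgraph of `G` induced on the vertex set `s`. -/
noncomputable def inducedEdgeCount (G : SimpleGraph V) (s : Finset V) : ℕ :=
  Nat.card (G.induce (s : Set V)).edgeSet

/-- `χ(G)`: the chromatic number of `G`, as a natural number. -/
noncomputable def chromNum (G : SimpleGraph V) : ℕ := G.chromaticNumber.toNat

/-- `α(G)`: the independence number of `G`. -/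
noncomputable def indepNum (G : SimpleGraph V) : ℕ :=
  sSup {k | ∃ s : Finset V, IsIndepFinset G s ∧ s.card = k}

/-- `θ(G) = min {n/2, α(G)}`. -/
noncomputable def theta (G : SimpleGraph V) : ℝ :=
  min ((Fintype.card V : ℝ) / 2) (_root_.indepNum G : ℝ)

/-- `η(G)`: the supremum of `|E(H)| / √(|V₁|·|V₂|)` over all induced bipartite
subgraphs `H` of `G` with bipartition into nonempty independent sets `V₁`, `V₂`. -/
noncomputable def eta (G : SimpleGraph V) : ℝ :=
  sSup {x : ℝ | ∃ V₁ V₂ : Finset V, V₁.Nonempty ∧ V₂.Nonempty ∧ Disjoint V₁ V₂ ∧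
    IsIndepFinset G V₁ ∧ IsIndepFinset G V₂ ∧
    x = (inducedEdgeCount G (V₁ ∪ V₂) : ℝ) / Real.sqrt ((V₁.card : ℝ) * (V₂.card : ℝ))}

/-- `ι(G)`: the supremum of the average degree `2|E(H)|/|V(H)|` over all nonempty
induced bipartite subgraphs `H` of `G`. -/
noncomputable def iota (G : SimpleGraph V) : ℝ :=
  sSup {x : ℝ | ∃ V₁ V₂ : Finset V, (V₁ ∪ V₂).Nonempty ∧ Disjoint V₁ V₂ ∧
    IsIndepFinset G V₁ ∧ IsIndepFinset G V₂ ∧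
    x = 2 * (inducedEdgeCount G (V₁ ∪ V₂) : ℝ) / ((V₁ ∪ V₂).card : ℝ)}


section Helpers

lemma rayleigh_min {A : Matrix V V ℝ} (hA : A.IsHermitian) (x : V → ℝ) :
    (⨅ i, hA.eigenvalues i) * (x ⬝ᵥ x) ≤ x ⬝ᵥ A *ᵥ x := by
  set U : Matrix V V ℝ := ↑hA.eigenvectorUnitary with hU
  have hUU : U * star U = 1 := (Matrix.mem_unitaryGroup_iff).mp hA.eigenvectorUnitary.2
  have hsU : (star U)ᵀ = U := by
    rw [Matrix.star_eq_conjTranspose, Matrix.conjTranspose_eq_transpose_of_trivial,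
      Matrix.transpose_transpose]
  have hUt : Uᵀ = star U := by
    rw [Matrix.star_eq_conjTranspose, Matrix.conjTranspose_eq_transpose_of_trivial]
  set y : V → ℝ := star U *ᵥ x with hy
  have hxy : x ⬝ᵥ x = y ⬝ᵥ y := by
    calc x ⬝ᵥ x = (((star U)ᵀ * star U) *ᵥ x) ⬝ᵥ x := by
          rw [hsU, hUU, Matrix.one_mulVec]
      _ = ((star U)ᵀ *ᵥ (star U *ᵥ x)) ⬝ᵥ x := by rw [Matrix.mulVec_mulVec]
      _ = ((star U *ᵥ x) ᵥ* star U) ⬝ᵥ x := by rw [Matrix.mulVec_transpose]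
      _ = y ⬝ᵥ y := (Matrix.dotProduct_mulVec _ _ _).symm
  have hquad : x ⬝ᵥ A *ᵥ x = ∑ i, hA.eigenvalues i * (y i * y i) := by
    conv_lhs => rw [hA.spectral_theorem]
    rw [Unitary.conjStarAlgAut_apply]
    rw [← hU, Matrix.mul_assoc, ← Matrix.mulVec_mulVec, ← Matrix.mulVec_mulVec, ← hy]
    have h1 : x ⬝ᵥ U *ᵥ (Matrix.diagonal (RCLike.ofReal ∘ hA.eigenvalues) *ᵥ y)
        = y ⬝ᵥ (Matrix.diagonal (RCLike.ofReal ∘ hA.eigenvalues) *ᵥ y) := by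
      rw [Matrix.dotProduct_mulVec x U, ← Matrix.mulVec_transpose, hUt, ← hy]
    rw [h1, dotProduct]
    apply Finset.sum_congr rfl
    intro i _
    rw [Matrix.mulVec_diagonal]
    simp [Function.comp]
    ring
  rw [hxy, hquad, dotProduct, Finset.mul_sum]
  apply Finset.sum_le_sum
  intro i _
  exact mul_le_mul_of_nonneg_right (ciInf_le (Finite.bddBelow_range _) i) (mul_self_nonneg _)

lemma inducedEdgeCount_eq_sum (G : SimpleGraph V) [DecidableRel G.Adj] {V₁ V₂ : Finset V}
    (hd : Disjoint V₁ V₂) (h1 : IsIndepFinset G V₁) (h2 : IsIndepFinset G V₂) :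
    inducedEdgeCount G (V₁ ∪ V₂) = ∑ u ∈ V₁, ∑ v ∈ V₂, if G.Adj u v then 1 else 0 := by
  classical
  set s : Finset V := V₁ ∪ V₂ with hs
  letI : DecidableRel (G.induce (s : Set V)).Adj := fun a b =>
    decidable_of_iff (G.Adj a b) Iff.rfl
  have hcard : inducedEdgeCount G s = (G.induce (s : Set V)).edgeFinset.card := by
    rw [inducedEdgeCount, SimpleGraph.edgeFinset_card, Nat.card_eq_fintype_card]
  have hsum := SimpleGraph.sum_degrees_eq_twice_card_edges (G.induce (s : Set V))
  have hdeg : ∀ a : (s : Set V), (G.induce (s : Set V)).degree a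
      = ∑ w : (s : Set V), if G.Adj a w then 1 else 0 := by
    intro a
    rw [SimpleGraph.degree, SimpleGraph.neighborFinset_eq_filter, Finset.card_filter]
    apply Finset.sum_congr rfl
    intro w _
    exact if_congr Iff.rfl rfl rfl
  have hdouble : ∑ a : (s : Set V), (G.induce (s : Set V)).degree a
      = ∑ u ∈ s, ∑ v ∈ s, if G.Adj u v then 1 else 0 := by
    rw [Finset.sum_congr rfl fun a _ => hdeg a]
    rw [Finset.sum_finset_coe (f := fun u => ∑ w : (s : Set V), if G.Adj u w then 1 else 0)]
    apply Finset.sum_congr rfl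
    intro u _
    exact Finset.sum_finset_coe (f := fun w => if G.Adj u w then 1 else 0) s
  have hsplit : ∑ u ∈ s, ∑ v ∈ s, (if G.Adj u v then 1 else 0)
      = 2 * ∑ u ∈ V₁, ∑ v ∈ V₂, if G.Adj u v then 1 else 0 := by
    rw [hs, Finset.sum_union hd]
    have e1 : ∀ u ∈ V₁, ∑ v ∈ V₁ ∪ V₂, (if G.Adj u v then 1 else 0)
        = ∑ v ∈ V₂, if G.Adj u v then 1 else 0 := by
      intro u hu
      rw [Finset.sum_union hd]
      have : ∑ v ∈ V₁, (if G.Adj u v then 1 else 0) = 0 :=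
        Finset.sum_eq_zero fun v hv => by simp [h1 u hu v hv]
      rw [this, zero_add]
    have e2 : ∀ u ∈ V₂, ∑ v ∈ V₁ ∪ V₂, (if G.Adj u v then 1 else 0)
        = ∑ v ∈ V₁, if G.Adj u v then 1 else 0 := by
      intro u hu
      rw [Finset.sum_union hd]
      have : ∑ v ∈ V₂, (if G.Adj u v then 1 else 0) = 0 :=
        Finset.sum_eq_zero fun v hv => by simp [h2 u hu v hv]
      rw [this, add_zero]
    rw [Finset.sum_congr rfl e1, Finset.sum_congr rfl e2]
    have : ∑ u ∈ V₂, ∑ v ∈ V₁, (if G.Adj u v then 1 else 0)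
        = ∑ u ∈ V₁, ∑ v ∈ V₂, if G.Adj u v then 1 else 0 := by
      rw [Finset.sum_comm]
      apply Finset.sum_congr rfl; intro u _
      apply Finset.sum_congr rfl; intro v _
      simp [SimpleGraph.adj_comm]
    rw [this]; ring
  have := hsum
  rw [hdouble, hsplit] at this
  omega

end Helpers

/-- Corollary 2.3. Let `G` be a graph with at least two vertices.
Then `λ(G) ≤ -η(G)`. -/
theorem smallest_eigenvalue_le_neg_eta (G : SimpleGraph V) (hV : 2 ≤ Fintype.card V) :
    lambdaMin G ≤ -eta G := by
  letI := Classical.decRel G.Adj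
  have hne : Nonempty V := Fintype.card_pos_iff.mp (by omega)
  obtain ⟨v0⟩ := hne
  have key : ∀ x : V → ℝ, lambdaMin G * (x ⬝ᵥ x) ≤ x ⬝ᵥ (G.adjMatrix ℝ) *ᵥ x :=
    fun x => rayleigh_min (adj_isHermitian G) x
  have hl0 : lambdaMin G ≤ 0 := by
    have h := key (Pi.single v0 1)
    simp [single_dotProduct, dotProduct_single, Matrix.mulVec_single] at h
    simpa using h
  rw [le_neg]
  apply Real.sSup_le
  · rintro x ⟨V₁, V₂, h1, h2, hd, hi1, hi2, rfl⟩
    set p : ℝ := (V₁.card : ℝ) with hpdef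
    set q : ℝ := (V₂.card : ℝ) with hqdef
    have hp : (0:ℝ) < p := by rw [hpdef]; exact_mod_cast h1.card_pos
    have hq : (0:ℝ) < q := by rw [hqdef]; exact_mod_cast h2.card_pos
    set z : V → ℝ := fun w => if w ∈ V₁ then Real.sqrt q else if w ∈ V₂ then -Real.sqrt p else 0
      with hz
    have hz1 : ∀ w ∈ V₁, z w = Real.sqrt q := fun w hw => by simp [hz, hw]
    have hz2 : ∀ w ∈ V₂, z w = -Real.sqrt p := fun w hw => by
      have hw1 : w ∉ V₁ := fun h => (Finset.disjoint_left.mp hd h) hw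
      simp [hz, hw, hw1]
    have hz0 : ∀ w, w ∉ V₁ ∪ V₂ → z w = 0 := fun w hw => by
      rw [Finset.mem_union] at hw; push_neg at hw
      simp [hz, hw.1, hw.2]
    have hzz : z ⬝ᵥ z = 2 * (p * q) := by
      have hterm : ∀ w, z w * z w = (if w ∈ V₁ then q else 0) + (if w ∈ V₂ then p else 0) := by
        intro w
        by_cases hw1 : w ∈ V₁
        · have hw2 : w ∉ V₂ := fun h => (Finset.disjoint_left.mp hd hw1) h
          simp [hz1 w hw1, hw1, hw2, Real.mul_self_sqrt hq.le]
        · by_cases hw2 : w ∈ V₂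
          · simp [hz2 w hw2, hw1, hw2, Real.mul_self_sqrt hp.le]
          · simp [hz0 w (by simp [hw1, hw2]), hw1, hw2]
      rw [dotProduct, Finset.sum_congr rfl (fun w _ => hterm w), Finset.sum_add_distrib,
        Finset.sum_ite_mem, Finset.sum_ite_mem, Finset.univ_inter, Finset.univ_inter,
        Finset.sum_const, Finset.sum_const, nsmul_eq_mul, nsmul_eq_mul]
      rw [← hpdef, ← hqdef]; ring
    set S : ℝ := ∑ u ∈ V₁, ∑ v ∈ V₂, if G.Adj u v then (1:ℝ) else 0 with hS
    have hform : z ⬝ᵥ (G.adjMatrix ℝ) *ᵥ z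
        = ∑ u, ∑ w, if G.Adj u w then z u * z w else 0 := by
      simp only [dotProduct, Matrix.mulVec, SimpleGraph.adjMatrix_apply, Finset.mul_sum]
      apply Finset.sum_congr rfl; intro u _
      apply Finset.sum_congr rfl; intro w _
      by_cases h : G.Adj u w <;> simp [h]
    have hrestrict : (∑ u, ∑ w, if G.Adj u w then z u * z w else 0)
        = ∑ u ∈ V₁ ∪ V₂, ∑ w ∈ V₁ ∪ V₂, if G.Adj u w then z u * z w else 0 := by
      rw [← Finset.sum_subset (Finset.subset_univ (V₁ ∪ V₂)) (fun u _ hu => by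
        apply Finset.sum_eq_zero; intro w _
        rw [hz0 u hu]; simp)]
      apply Finset.sum_congr rfl; intro u _
      rw [← Finset.sum_subset (Finset.subset_univ (V₁ ∪ V₂)) (fun w _ hw => by
        rw [hz0 w hw]; simp)]
    have hquad : z ⬝ᵥ (G.adjMatrix ℝ) *ᵥ z = -(2 * (Real.sqrt p * Real.sqrt q) * S) := by
      rw [hform, hrestrict, Finset.sum_union hd]
      have e1 : ∑ u ∈ V₁, ∑ w ∈ V₁ ∪ V₂, (if G.Adj u w then z u * z w else 0)
          = -(Real.sqrt p * Real.sqrt q) * S := by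
        rw [hS, Finset.mul_sum]
        apply Finset.sum_congr rfl; intro u hu
        rw [Finset.sum_union hd]
        have b11 : ∑ w ∈ V₁, (if G.Adj u w then z u * z w else 0) = 0 :=
          Finset.sum_eq_zero fun w hw => by simp [hi1 u hu w hw]
        rw [b11, zero_add, Finset.mul_sum]
        apply Finset.sum_congr rfl; intro w hw
        by_cases h : G.Adj u w <;> simp [h, hz1 u hu, hz2 w hw] <;> ring
      have e2 : ∑ u ∈ V₂, ∑ w ∈ V₁ ∪ V₂, (if G.Adj u w then z u * z w else 0)
          = -(Real.sqrt p * Real.sqrt q) * S := by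
        have hS' : S = ∑ u ∈ V₂, ∑ w ∈ V₁, if G.Adj u w then (1:ℝ) else 0 := by
          rw [hS, Finset.sum_comm]
          apply Finset.sum_congr rfl; intro u _
          apply Finset.sum_congr rfl; intro w _
          simp [SimpleGraph.adj_comm]
        rw [hS', Finset.mul_sum]
        apply Finset.sum_congr rfl; intro u hu
        rw [Finset.sum_union hd]
        have b22 : ∑ w ∈ V₂, (if G.Adj u w then z u * z w else 0) = 0 :=
          Finset.sum_eq_zero fun w hw => by simp [hi2 u hu w hw]
        rw [b22, add_zero, Finset.mul_sum]
        apply Finset.sum_congr rfl; intro w hw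
        by_cases h : G.Adj u w <;> simp [h, hz2 u hu, hz1 w hw] <;> ring
      rw [e1, e2]; ring
    have hkey := key z
    rw [hzz, hquad] at hkey
    have hcount : ((inducedEdgeCount G (V₁ ∪ V₂) : ℝ)) = S := by
      rw [inducedEdgeCount_eq_sum G hd hi1 hi2, hS]
      push_cast
      rfl
    rw [hcount, Real.sqrt_mul hp.le, div_le_iff₀ (by positivity)]
    have ht : (0:ℝ) < Real.sqrt p * Real.sqrt q := by positivity
    have hpq : p * q = (Real.sqrt p * Real.sqrt q) ^ 2 := by
      rw [mul_pow, Real.sq_sqrt hp.le, Real.sq_sqrt hq.le]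
    nlinarith [hkey, ht, hpq]
  · linarith
end

section
/- For a positive integer s, let H_s = 2K_s * 2K_s be the join of two copies of the disjoint union of two complete graphs K_s. Then the smallest adjacency eigenvalue of H_s equals -(s+1); equivalently, λ(H_s) = -(|V(H_s)|/4 + 1). Consequently, |-η(H_s) - λ(H_s)| = s - 1, so the gap between -η(H_s) and λ(H_s) grows linearly in |V(H_s)|. -/
/-!
Common definitions: smallest adjacency eigenvalue, independent vertex sets,
edge counts of induced subgraphs, chromatic number, independence number,
and the invariants `η`, `ι`, `θ` from the paper.
-/

open Finset SimpleGraph Matrix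

set_option linter.unusedSectionVars false

variable {V : Type} [Fintype V] [DecidableEq V]

/-- The join `G₁ * G₂` of two graphs: their disjoint union together with all the
edges between the two vertex sets. -/
def graphJoin {α β : Type} (G₁ : SimpleGraph α) (G₂ : SimpleGraph β) :
    SimpleGraph (α ⊕ β) where
  Adj u v :=
    match u, v with
    | Sum.inl a, Sum.inl a' => G₁.Adj a a'
    | Sum.inr b, Sum.inr b' => G₂.Adj b b'
    | Sum.inl _, Sum.inr _ => True
    | Sum.inr _, Sum.inl _ => True
  symm := ⟨by rintro (a | b) (a' | b') h <;> first | exact h.symm | trivial⟩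
  loopless := ⟨by rintro (a | b) h <;> first | exact G₁.irrefl h | exact G₂.irrefl h⟩

/-- `2Kₛ`: the disjoint union of two copies of the complete graph `Kₛ`
(the copies are indexed by `Fin 2`). -/
def twoComplete (s : ℕ) : SimpleGraph (Fin 2 × Fin s) where
  Adj u v := u.1 = v.1 ∧ u.2 ≠ v.2
  symm := ⟨fun _ _ h => ⟨h.1.symm, h.2.symm⟩⟩
  loopless := ⟨fun _ h => h.2 rfl⟩

/-- `Hₛ = 2Kₛ * 2Kₛ`: the join of two copies of `2Kₛ` (Example 3.4). -/
def paperGraphH (s : ℕ) : SimpleGraph ((Fin 2 × Fin s) ⊕ (Fin 2 × Fin s)) :=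
  graphJoin (twoComplete s) (twoComplete s)

variable {n : Type} [Fintype n] [DecidableEq n]

lemma aux_exists_eigenvalue {A : Matrix n n ℝ} (hA : A.IsHermitian) {μ : ℝ} {w : n → ℝ}
    (hw : w ≠ 0) (h : A *ᵥ w = μ • w) : ∃ i, hA.eigenvalues i = μ := by
  classical
  set U : Matrix n n ℝ := (hA.eigenvectorUnitary : Matrix n n ℝ) with hU
  have hUU : star U * U = 1 := (Matrix.mem_unitaryGroup_iff').mp hA.eigenvectorUnitary.2
  have hUU' : U * star U = 1 := (Matrix.mem_unitaryGroup_iff).mp hA.eigenvectorUnitary.2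
  set y : n → ℝ := star U *ᵥ w with hy
  have hyne : y ≠ 0 := by
    intro h0
    apply hw
    have : (U * star U) *ᵥ w = U *ᵥ y := by rw [← Matrix.mulVec_mulVec, hy]
    rw [hUU', Matrix.one_mulVec] at this
    rw [this, h0, Matrix.mulVec_zero]
  have hdiag : Matrix.diagonal (RCLike.ofReal ∘ hA.eigenvalues) *ᵥ y = μ • y := by
    have hA' := hA.spectral_theorem
    have h2 : star U *ᵥ (A *ᵥ w) = star U *ᵥ (μ • w) := by rw [h]
    rw [hA', Unitary.conjStarAlgAut_apply] at h2
    simp only [← hU] at h2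
    rw [← Matrix.mulVec_mulVec, ← Matrix.mulVec_mulVec] at h2
    rw [Matrix.mulVec_mulVec, Matrix.mulVec_mulVec] at h2
    rw [hUU, Matrix.one_mul, Matrix.mulVec_smul] at h2
    exact h2
  obtain ⟨i, hi⟩ := Function.ne_iff.mp hyne
  refine ⟨i, ?_⟩
  have := congrFun hdiag i
  simp only [Matrix.mulVec_diagonal, Pi.smul_apply, smul_eq_mul, Function.comp,
    RCLike.ofReal_real_eq_id, id_eq] at this
  exact mul_right_cancel₀ hi this

lemma aux_eigenvalue_ge {A : Matrix n n ℝ} (hA : A.IsHermitian) {c : ℝ}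
    (h : ∀ x : n → ℝ, 0 ≤ x ⬝ᵥ (A *ᵥ x) + c * (x ⬝ᵥ x)) (i : n) : -c ≤ hA.eigenvalues i := by
  have hv := hA.eigenvalues_eq i
  set v : n → ℝ := ⇑(hA.eigenvectorBasis i) with hvdef
  have hnorm : ‖hA.eigenvectorBasis i‖ = 1 := hA.eigenvectorBasis.orthonormal.1 i
  have hdot : v ⬝ᵥ v = 1 := by
    have : (inner ℝ (hA.eigenvectorBasis i) (hA.eigenvectorBasis i) : ℝ) = 1 := by
      rw [real_inner_self_eq_norm_sq, hnorm]; norm_num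
    rw [← this, PiLp.inner_apply]
    simp only [RCLike.inner_apply, starRingEnd_apply, star_trivial]
    rfl
  have := h v
  rw [hdot] at this
  have hv' : hA.eigenvalues i = v ⬝ᵥ (A *ᵥ v) := by
    simpa using hv
  linarith [this, hv'.ge]
section Helpers

lemma offdiag_sum {m : ℕ} (a : Fin m → ℝ) :
    ∑ j, ∑ k, (if j ≠ k then a j * a k else 0) = (∑ j, a j)^2 - ∑ j, (a j)^2 := by
  have h1 : ∀ j : Fin m, ∑ k, (if j ≠ k then a j * a k else 0)
      = a j * (∑ k, a k) - a j * a j := by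
    intro j
    have h2 : ∀ k : Fin m, (if j ≠ k then a j * a k else 0)
        = a j * a k - (if j = k then a j * a k else 0) := by
      intro k; by_cases h : j = k <;> simp [h]
    rw [Finset.sum_congr rfl (fun k _ => h2 k), Finset.sum_sub_distrib,
      Finset.sum_ite_eq univ j (fun k => a j * a k), ← Finset.mul_sum]
    simp
  rw [Finset.sum_congr rfl (fun j _ => h1 j), Finset.sum_sub_distrib, ← Finset.sum_mul]
  ring_nf

lemma clique_sum {m : ℕ} (f : Fin 2 × Fin m → ℝ) :
    ∑ p : Fin 2 × Fin m, ∑ q : Fin 2 × Fin m, (if p.1 = q.1 ∧ p.2 ≠ q.2 then f p * f q else 0)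
    = ((∑ j, f (0,j))^2 - ∑ j, (f (0,j))^2) + ((∑ j, f (1,j))^2 - ∑ j, (f (1,j))^2) := by
  simp only [Fintype.sum_prod_type, Fin.sum_univ_two]
  simp only [Fin.isValue, ne_eq, zero_ne_one, one_ne_zero, false_and, if_false, true_and,
    Finset.sum_const_zero, add_zero, zero_add, ite_not]
  rw [← offdiag_sum (fun j => f (0,j)), ← offdiag_sum (fun j => f (1,j))]
  simp [ite_not]

lemma cross_sum {m : ℕ} (a b : Fin m → ℝ) :
    ∑ j, ∑ k, a j * b k = (∑ j, a j) * (∑ k, b k) := by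
  rw [Finset.sum_mul_sum]

variable (s : ℕ)

lemma adjH_inl_inl (p q : Fin 2 × Fin s) :
    (paperGraphH s).Adj (.inl p) (.inl q) ↔ p.1 = q.1 ∧ p.2 ≠ q.2 := Iff.rfl
lemma adjH_inr_inr (p q : Fin 2 × Fin s) :
    (paperGraphH s).Adj (.inr p) (.inr q) ↔ p.1 = q.1 ∧ p.2 ≠ q.2 := Iff.rfl
lemma adjH_inl_inr (p q : Fin 2 × Fin s) :
    (paperGraphH s).Adj (.inl p) (.inr q) := trivial
lemma adjH_inr_inl (p q : Fin 2 × Fin s) :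
    (paperGraphH s).Adj (.inr p) (.inl q) := trivial

lemma quadform (inst : DecidableRel (paperGraphH s).Adj)
    (x : ((Fin 2 × Fin s) ⊕ (Fin 2 × Fin s)) → ℝ) :
    0 ≤ x ⬝ᵥ ((paperGraphH s).adjMatrix ℝ *ᵥ x) + ((s:ℝ)+1) * (x ⬝ᵥ x) := by
  classical
  set S : Fin 2 → ℝ := fun i => ∑ j, x (.inl (i,j)) with hS
  set T : Fin 2 → ℝ := fun i => ∑ j, x (.inr (i,j)) with hT
  set QS : Fin 2 → ℝ := fun i => ∑ j, (x (.inl (i,j)))^2 with hQS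
  set QT : Fin 2 → ℝ := fun i => ∑ j, (x (.inr (i,j)))^2 with hQT
  have hxx : x ⬝ᵥ x = QS 0 + QS 1 + QT 0 + QT 1 := by
    simp only [dotProduct, Fintype.sum_sum_type, Fintype.sum_prod_type, hQS, hQT,
      Fin.sum_univ_two, sq]
    ring
  have hquad : x ⬝ᵥ ((paperGraphH s).adjMatrix ℝ *ᵥ x)
      = ((S 0)^2 - QS 0) + ((S 1)^2 - QS 1) + ((T 0)^2 - QT 0) + ((T 1)^2 - QT 1)
        + 2 * (S 0 + S 1) * (T 0 + T 1) := by
    have expand : x ⬝ᵥ ((paperGraphH s).adjMatrix ℝ *ᵥ x)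
        = ∑ u, ∑ v, (if (paperGraphH s).Adj u v then x u * x v else 0) := by
      simp only [dotProduct, Matrix.mulVec, dotProduct,
        SimpleGraph.adjMatrix_apply, Finset.mul_sum, mul_ite, mul_zero, mul_one]
      exact Finset.sum_congr rfl fun u _ => Finset.sum_congr rfl fun v _ => by
        by_cases h : (paperGraphH s).Adj u v <;> simp [h]
    rw [expand]
    have block : ∑ u, ∑ v, (if (paperGraphH s).Adj u v then x u * x v else 0)
        = (∑ p, ∑ q, (if (p.1 : Fin 2) = q.1 ∧ p.2 ≠ q.2 then x (.inl p) * x (.inl q) else 0))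
        + (∑ p : Fin 2 × Fin s, ∑ q : Fin 2 × Fin s, x (.inl p) * x (.inr q))
        + (∑ p : Fin 2 × Fin s, ∑ q : Fin 2 × Fin s, x (.inr p) * x (.inl q))
        + (∑ p, ∑ q, (if (p.1 : Fin 2) = q.1 ∧ p.2 ≠ q.2 then x (.inr p) * x (.inr q) else 0)) := by
      rw [Fintype.sum_sum_type]
      simp only [Fintype.sum_sum_type, Finset.sum_add_distrib,
        adjH_inl_inl, adjH_inr_inr, adjH_inl_inr, adjH_inr_inl, if_true]
      ring
    rw [block, clique_sum (fun p => x (.inl p)), clique_sum (fun p => x (.inr p))]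
    have hsl : ∑ p : Fin 2 × Fin s, x (.inl p) = S 0 + S 1 := by
      simp [Fintype.sum_prod_type, Fin.sum_univ_two, hS]
    have hsr : ∑ p : Fin 2 × Fin s, x (.inr p) = T 0 + T 1 := by
      simp [Fintype.sum_prod_type, Fin.sum_univ_two, hT]
    rw [← Finset.sum_mul_sum, ← Finset.sum_mul_sum, hsl, hsr]
    simp only [hS, hT, hQS, hQT]
    ring
  have cs0 : (S 0)^2 ≤ (s:ℝ) * QS 0 := by
    have := sq_sum_le_card_mul_sum_sq (s := (univ : Finset (Fin s)))
      (f := fun j => x (.inl (0,j)))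
    simpa [hS, hQS] using this
  have cs1 : (S 1)^2 ≤ (s:ℝ) * QS 1 := by
    have := sq_sum_le_card_mul_sum_sq (s := (univ : Finset (Fin s)))
      (f := fun j => x (.inl (1,j)))
    simpa [hS, hQS] using this
  have cs2 : (T 0)^2 ≤ (s:ℝ) * QT 0 := by
    have := sq_sum_le_card_mul_sum_sq (s := (univ : Finset (Fin s)))
      (f := fun j => x (.inr (0,j)))
    simpa [hT, hQT] using this
  have cs3 : (T 1)^2 ≤ (s:ℝ) * QT 1 := by
    have := sq_sum_le_card_mul_sum_sq (s := (univ : Finset (Fin s)))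
      (f := fun j => x (.inr (1,j)))
    simpa [hT, hQT] using this
  rw [hxx, hquad]
  nlinarith [sq_nonneg (S 0 + S 1 + T 0 + T 1), sq_nonneg (S 0 - S 1), sq_nonneg (T 0 - T 1),
    cs0, cs1, cs2, cs3]

end Helpers
section Eig
variable (s : ℕ)

lemma count_diag (j : Fin s) (a : ℝ) :
    ∑ k : Fin s, (if (j:ℕ) = (k:ℕ) then (0:ℝ) else a) = ((s:ℝ)-1) * a := by
  have h : ∀ k : Fin s, (if (j:ℕ) = (k:ℕ) then (0:ℝ) else a)
      = a - (if j = k then a else 0) := by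
    intro k; by_cases h : j = k <;> simp [h, Fin.val_inj]
  rw [Finset.sum_congr rfl fun k _ => h k, Finset.sum_sub_distrib,
    Finset.sum_ite_eq univ j (fun _ => a)]
  simp
  ring

lemma eigvec_w (inst : DecidableRel (paperGraphH s).Adj) :
    (paperGraphH s).adjMatrix ℝ *ᵥ (Sum.elim (fun _ => (1:ℝ)) (fun _ => -1))
      = (-((s:ℝ)+1)) • (Sum.elim (fun _ => (1:ℝ)) (fun _ => -1)) := by
  funext u
  rcases u with ⟨i,j⟩|⟨i,j⟩ <;> fin_cases i <;>
  · simp only [Matrix.mulVec, dotProduct, SimpleGraph.adjMatrix_apply,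
      Fintype.sum_sum_type, Fintype.sum_prod_type, Fin.sum_univ_two,
      adjH_inl_inl, adjH_inr_inr, adjH_inl_inr, adjH_inr_inl,
      Sum.elim_inl, Sum.elim_inr, Pi.smul_apply, smul_eq_mul,
      mul_one, mul_neg, if_true, ite_mul, one_mul, zero_mul]
    simp [Fin.ext_iff]
    rw [count_diag]
    ring
end Eig
section Eta

/-- Edges of an induced union of two independent sets are at most `|V₁|·|V₂|`. -/
lemma inducedEdgeCount_le_mul {W : Type} [Fintype W] [DecidableEq W] (G : SimpleGraph W)
    (V₁ V₂ : Finset W) (h1 : IsIndepFinset G V₁) (h2 : IsIndepFinset G V₂) :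
    inducedEdgeCount G (V₁ ∪ V₂) ≤ V₁.card * V₂.card := by
  classical
  unfold inducedEdgeCount
  set U : Set W := ↑(V₁ ∪ V₂) with hUdef
  by_cases hne : Nonempty ((G.induce U).edgeSet)
  · obtain ⟨e₀⟩ := hne
    have hmem : ∀ a : W, a ∈ V₁ → a ∈ U := fun a ha => by
      simp [hUdef, Finset.mem_union, ha]
    have hmem' : ∀ a : W, a ∈ V₂ → a ∈ U := fun a ha => by
      simp [hUdef, Finset.mem_union, ha]
    set f : (↑V₁ : Finset W) × (↑V₂ : Finset W) → (G.induce U).edgeSet := fun p =>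
      if h : (G.induce U).Adj ⟨p.1.1, hmem _ p.1.2⟩ ⟨p.2.1, hmem' _ p.2.2⟩ then
        ⟨s(⟨p.1.1, hmem _ p.1.2⟩, ⟨p.2.1, hmem' _ p.2.2⟩), h⟩
      else e₀ with hf
    have hsurj : Function.Surjective f := by
      rintro ⟨e, he⟩
      induction e using Sym2.ind with
      | _ a b =>
        rw [SimpleGraph.mem_edgeSet] at he
        have hab : G.Adj a.1 b.1 := he
        have ha : a.1 ∈ V₁ ∨ a.1 ∈ V₂ := by
          have := a.2; simpa [hUdef, Finset.mem_union] using this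
        have hb : b.1 ∈ V₁ ∨ b.1 ∈ V₂ := by
          have := b.2; simpa [hUdef, Finset.mem_union] using this
        rcases ha with ha | ha
        · have hb2 : b.1 ∈ V₂ := by
            rcases hb with hb | hb
            · exact absurd hab (h1 _ ha _ hb)
            · exact hb
          refine ⟨(⟨a.1, ha⟩, ⟨b.1, hb2⟩), ?_⟩
          have hadj : (G.induce U).Adj ⟨a.1, hmem _ ha⟩ ⟨b.1, hmem' _ hb2⟩ := hab
          simp only [hf, dif_pos hadj]
        · have hb1 : b.1 ∈ V₁ := by
            rcases hb with hb | hb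
            · exact hb
            · exact absurd hab (h2 _ ha _ hb)
          refine ⟨(⟨b.1, hb1⟩, ⟨a.1, ha⟩), ?_⟩
          have hadj : (G.induce U).Adj ⟨b.1, hmem _ hb1⟩ ⟨a.1, hmem' _ ha⟩ := hab.symm
          simp only [hf, dif_pos hadj]
          exact Subtype.ext Sym2.eq_swap
    calc Nat.card (G.induce U).edgeSet ≤ Nat.card ((↑V₁ : Finset W) × (↑V₂ : Finset W)) :=
          Nat.card_le_card_of_surjective f hsurj
      _ = V₁.card * V₂.card := by
          rw [Nat.card_prod, Nat.card_eq_finsetCard, Nat.card_eq_finsetCard]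
  · rw [not_nonempty_iff] at hne
    simp [Nat.card_of_isEmpty]


/-- Independent sets in `paperGraphH s` have at most 2 vertices. -/
lemma indep_card_le_two (s : ℕ) (t : Finset ((Fin 2 × Fin s) ⊕ (Fin 2 × Fin s)))
    (h : IsIndepFinset (paperGraphH s) t) : t.card ≤ 2 := by
  classical
  have : t.card ≤ (univ : Finset (Fin 2)).card := by
    apply Finset.card_le_card_of_injOn (Sum.elim Prod.fst Prod.fst)
      (fun _ _ => Finset.mem_univ _)
    intro u hu v hv heq
    by_contra hne
    apply h u hu v hv
    rcases u with p | p <;> rcases v with q | q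
    · simp only [Sum.elim_inl] at heq
      have : p.2 ≠ q.2 := fun h2 => hne (by rw [Prod.ext heq h2])
      exact ⟨heq, this⟩
    · exact adjH_inl_inr s p q
    · exact adjH_inr_inl s p q
    · simp only [Sum.elim_inr] at heq
      have : p.2 ≠ q.2 := fun h2 => hne (by rw [Prod.ext heq h2])
      exact ⟨heq, this⟩
  simpa using this

/-- The concrete 4-cycle-with-two... cross graph on `Fin 2 ⊕ Fin 2`. -/
def crossGraph : SimpleGraph (Fin 2 ⊕ Fin 2) where
  Adj u v := u.isLeft ≠ v.isLeft
  symm := ⟨fun _ _ h => h.symm⟩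
  loopless := ⟨fun _ h => h rfl⟩

instance : DecidableRel crossGraph.Adj := fun u v => by
  unfold crossGraph; infer_instance

lemma crossGraph_card : Nat.card crossGraph.edgeSet = 4 := by
  rw [Nat.card_eq_fintype_card]
  decide

end Eta
section Eta2

variable (s : ℕ)

lemma edge4 (hs : 0 < s) :
    inducedEdgeCount (paperGraphH s)
      (({Sum.inl ((0:Fin 2), (⟨0,hs⟩ : Fin s)), Sum.inl (1, ⟨0,hs⟩)} : Finset _) ∪
       ({Sum.inr ((0:Fin 2), ⟨0,hs⟩), Sum.inr (1, ⟨0,hs⟩)} : Finset _)) = 4 := by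
  classical
  unfold inducedEdgeCount
  set z : Fin s := ⟨0, hs⟩ with hz
  set F : Finset ((Fin 2 × Fin s) ⊕ (Fin 2 × Fin s)) :=
    ({Sum.inl ((0:Fin 2), z), Sum.inl (1, z)} : Finset _) ∪
    ({Sum.inr ((0:Fin 2), z), Sum.inr (1, z)} : Finset _) with hF
  set U : Set ((Fin 2 × Fin s) ⊕ (Fin 2 × Fin s)) := ↑F with hU
  have hmemU : ∀ x, x ∈ U ↔ (x = Sum.inl (0, z) ∨ x = Sum.inl (1, z) ∨
      x = Sum.inr (0, z) ∨ x = Sum.inr (1, z)) := by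
    intro x
    simp only [hU, hF, Finset.coe_union, Set.mem_union, Finset.coe_insert, Set.mem_insert_iff,
      Finset.coe_singleton, Set.mem_singleton_iff]
    tauto
  have hmemL : ∀ i : Fin 2, (Sum.inl (i, z) : (Fin 2 × Fin s) ⊕ (Fin 2 × Fin s)) ∈ U := by
    intro i; rw [hmemU]; fin_cases i
    · exact Or.inl rfl
    · exact Or.inr (Or.inl rfl)
  have hmemR : ∀ i : Fin 2, (Sum.inr (i, z) : (Fin 2 × Fin s) ⊕ (Fin 2 × Fin s)) ∈ U := by
    intro i; rw [hmemU]; fin_cases i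
    · exact Or.inr (Or.inr (Or.inl rfl))
    · exact Or.inr (Or.inr (Or.inr rfl))
  have iso : (paperGraphH s).induce U ≃g crossGraph := by
    refine ⟨⟨fun x => Sum.elim (fun p => Sum.inl p.1) (fun p => Sum.inr p.1) x.1,
      fun y => Sum.elim (fun i => ⟨Sum.inl (i, z), hmemL i⟩)
        (fun i => ⟨Sum.inr (i, z), hmemR i⟩) y, ?_, ?_⟩, ?_⟩
    · rintro ⟨v, hv⟩
      rw [hmemU] at hv
      rcases hv with rfl | rfl | rfl | rfl <;> rfl
    · rintro (i | i) <;> rfl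
    · rintro ⟨a, ha⟩ ⟨b, hb⟩
      rw [hmemU] at ha hb
      rcases ha with rfl | rfl | rfl | rfl <;> rcases hb with rfl | rfl | rfl | rfl <;>
        simp [crossGraph, paperGraphH, graphJoin, twoComplete]
  rw [Nat.card_congr iso.mapEdgeSet]
  exact crossGraph_card

lemma eta_eq_two (hs : 0 < s) : eta (paperGraphH s) = 2 := by
  classical
  set S : Set ℝ := {x : ℝ | ∃ V₁ V₂ : Finset ((Fin 2 × Fin s) ⊕ (Fin 2 × Fin s)),
    V₁.Nonempty ∧ V₂.Nonempty ∧ Disjoint V₁ V₂ ∧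
    IsIndepFinset (paperGraphH s) V₁ ∧ IsIndepFinset (paperGraphH s) V₂ ∧
    x = (inducedEdgeCount (paperGraphH s) (V₁ ∪ V₂) : ℝ) /
      Real.sqrt ((V₁.card : ℝ) * (V₂.card : ℝ))} with hSdef
  have hsqrt4 : Real.sqrt 4 = 2 := by
    rw [show (4:ℝ) = 2^2 by norm_num, Real.sqrt_sq (by norm_num : (0:ℝ) ≤ 2)]
  have hub : ∀ x ∈ S, x ≤ 2 := by
    rintro x ⟨V₁, V₂, h1n, h2n, hdis, hi1, hi2, rfl⟩
    have c1l : 1 ≤ V₁.card := Finset.card_pos.mpr h1n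
    have c2l : 1 ≤ V₂.card := Finset.card_pos.mpr h2n
    have c1u : V₁.card ≤ 2 := indep_card_le_two s V₁ hi1
    have c2u : V₂.card ≤ 2 := indep_card_le_two s V₂ hi2
    have hE : (inducedEdgeCount (paperGraphH s) (V₁ ∪ V₂) : ℝ) ≤ (V₁.card : ℝ) * V₂.card := by
      have := inducedEdgeCount_le_mul (paperGraphH s) V₁ V₂ hi1 hi2
      exact_mod_cast this
    set a : ℝ := (V₁.card : ℝ) * V₂.card with ha
    have ha1 : 1 ≤ a := by
      rw [ha]
      have : (1:ℝ) * 1 ≤ (V₁.card : ℝ) * V₂.card := by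
        apply mul_le_mul <;> first | exact_mod_cast c1l | exact_mod_cast c2l | norm_num
      linarith
    have ha4 : a ≤ 4 := by
      rw [ha]
      have : (V₁.card : ℝ) * V₂.card ≤ 2 * 2 := by
        apply mul_le_mul <;> first | exact_mod_cast c1u | exact_mod_cast c2u | norm_num
      linarith
    have hsq : Real.sqrt a * Real.sqrt a = a := Real.mul_self_sqrt (by linarith)
    have hsle : Real.sqrt a ≤ 2 := by
      calc Real.sqrt a ≤ Real.sqrt 4 := Real.sqrt_le_sqrt ha4
        _ = 2 := hsqrt4
    have hspos : 0 < Real.sqrt a := Real.sqrt_pos.mpr (by linarith)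
    rw [div_le_iff₀ hspos]
    nlinarith [Real.sqrt_nonneg a]
  have hmem : (2:ℝ) ∈ S := by
    refine ⟨({Sum.inl ((0:Fin 2), (⟨0,hs⟩ : Fin s)), Sum.inl (1, ⟨0,hs⟩)} : Finset _),
      ({Sum.inr ((0:Fin 2), (⟨0,hs⟩ : Fin s)), Sum.inr (1, ⟨0,hs⟩)} : Finset _),
      ⟨_, Finset.mem_insert_self _ _⟩, ⟨_, Finset.mem_insert_self _ _⟩, ?_, ?_, ?_, ?_⟩
    · simp [Finset.disjoint_left]
    · intro u hu v hv
      fin_cases hu <;> fin_cases hv <;>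
        simp [paperGraphH, graphJoin, twoComplete]
    · intro u hu v hv
      fin_cases hu <;> fin_cases hv <;>
        simp [paperGraphH, graphJoin, twoComplete]
    · rw [edge4 s hs]
      have hc : ∀ (i j : ((Fin 2 × Fin s) ⊕ (Fin 2 × Fin s))), i ≠ j →
          ({i, j} : Finset _).card = 2 := by
        intro i j hij
        rw [Finset.card_insert_of_notMem (by simpa using hij), Finset.card_singleton]
      rw [hc _ _ (by simp [Prod.ext_iff]), hc _ _ (by simp [Prod.ext_iff])]
      push_cast
      rw [show (2:ℝ) * 2 = 4 by norm_num, hsqrt4]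
      norm_num
  have : eta (paperGraphH s) = sSup S := rfl
  rw [this]
  exact le_antisymm (csSup_le ⟨2, hmem⟩ hub) (le_csSup ⟨2, hub⟩ hmem)

end Eta2
section Lam

lemma lam_eq (s : ℕ) (hs : 1 ≤ s) (inst : DecidableRel (paperGraphH s).Adj) :
    (⨅ i, (@adj_isHermitian _ _ _ (paperGraphH s) inst).eigenvalues i) = -((s:ℝ)+1) := by
  have : Nonempty ((Fin 2 × Fin s) ⊕ (Fin 2 × Fin s)) := ⟨Sum.inl (0, ⟨0, hs⟩)⟩
  set hA := @adj_isHermitian _ _ _ (paperGraphH s) inst with hAdef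
  have hge : ∀ i, -((s:ℝ)+1) ≤ hA.eigenvalues i := by
    intro i
    exact aux_eigenvalue_ge hA (fun x => quadform s inst x) i
  have hne : (Sum.elim (fun _ => (1:ℝ)) (fun _ => -1) :
      ((Fin 2 × Fin s) ⊕ (Fin 2 × Fin s)) → ℝ) ≠ 0 := by
    intro h0
    have := congrFun h0 (Sum.inl ((0 : Fin 2), ⟨0, hs⟩))
    simp at this
  obtain ⟨i0, hi0⟩ := aux_exists_eigenvalue hA hne (eigvec_w s inst)
  apply le_antisymm
  · exact hi0 ▸ ciInf_le (Set.Finite.bddBelow (Set.finite_range _)) i0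
  · exact le_ciInf hge

end Lam

/-- Example 3.4. `λ(Hₛ) = -(s+1) = -(|V(Hₛ)|/4 + 1)`, and consequently
`|-η(Hₛ) - λ(Hₛ)| = s - 1`, a gap growing linearly in `|V(Hₛ)|`. -/
theorem paperGraphH_lambdaMin_and_gap (s : ℕ) (hs : 1 ≤ s) :
    lambdaMin (paperGraphH s) = -((s : ℝ) + 1) ∧
      lambdaMin (paperGraphH s) =
        -((Fintype.card ((Fin 2 × Fin s) ⊕ (Fin 2 × Fin s)) : ℝ) / 4 + 1) ∧
      |(-eta (paperGraphH s)) - lambdaMin (paperGraphH s)| = (s : ℝ) - 1 := by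
  have hlam : lambdaMin (paperGraphH s) = -((s:ℝ)+1) := by
    unfold lambdaMin
    exact lam_eq s hs _
  have hcard : (Fintype.card ((Fin 2 × Fin s) ⊕ (Fin 2 × Fin s)) : ℝ) = 4 * s := by
    simp [Fintype.card_sum, Fintype.card_prod]
    ring
  refine ⟨hlam, ?_, ?_⟩
  · rw [hlam, hcard]
    ring
  · rw [hlam, eta_eq_two s hs]
    rw [show (-(2:ℝ) - -((s:ℝ)+1)) = (s:ℝ) - 1 by ring]
    apply abs_of_nonneg
    have : (1:ℝ) ≤ (s:ℝ) := by exact_mod_cast hs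
    linarith
end
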